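/- Let G_1 be the graft product attaching r copies of K at vertices x_1,...,x_r of H (via the same root y of K) and G_2 the product attaching all r copies at a single vertex x of H. Then with γ = α + β + ... + β, M_{G_2}^γ − M_{G_1}^γ = Σ_{i=1}^r [M_H^ξ(x) − M_H^ξ(x_i)] − B(|V_K|−1)·Σ_{i,j=1}^r dist_H(x_i,x_j), where ξ = (|V_K|−1)α + B and B is the total weight of K. In particular the difference depends on K only through |V_K| and B. -/
import Mathlib


open Finset

lemma sum_graft {r : ℕ} {VH VK VG : Type*} [Fintype VH] [Fintype VK] [Fintype VG]
    [DecidableEq VK]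
    (iH : VH → VG) (iK : Fin r → VK → VG) (p : Fin r → VH) (y : VK)
    (hiH : Function.Injective iH) (hiK : ∀ i, Function.Injective (iK i))
    (hxy : ∀ i, iH (p i) = iK i y)
    (hcover : ∀ w, (∃ u, w = iH u) ∨ (∃ i v, w = iK i v))
    (hdisjHK : ∀ i u v, iH u = iK i v → u = p i ∧ v = y)
    (hdisjKK : ∀ i j v v', i ≠ j → iK i v = iK j v' → v = y ∧ v' = y)
    (f : VG → ℝ) :
    ∑ w : VG, f w = ∑ u : VH, f (iH u) + ∑ i : Fin r, ∑ v ∈ univ.erase y, f (iK i v) := by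
  classical
  set F : VH ⊕ (Fin r × {v : VK // v ≠ y}) → VG :=
    Sum.elim iH (fun q => iK q.1 q.2.1) with hF
  have hbij : Function.Bijective F := by
    constructor
    · rintro (u | ⟨i, v, hv⟩) (u' | ⟨i', v', hv'⟩) h <;>
        simp only [hF, Sum.elim_inl, Sum.elim_inr] at h
      · exact congrArg Sum.inl (hiH h)
      · exact absurd (hdisjHK _ _ _ h).2 hv'
      · exact absurd (hdisjHK _ _ _ h.symm).2 hv
      · rcases eq_or_ne i i' with rfl | hne
        · simp [hiK i h]
        · exact absurd (hdisjKK _ _ _ _ hne h).1 hv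
    · intro w
      rcases hcover w with ⟨u, rfl⟩ | ⟨i, v, rfl⟩
      · exact ⟨Sum.inl u, rfl⟩
      · rcases eq_or_ne v y with rfl | hv
        · exact ⟨Sum.inl (p i), (hxy i).symm ▸ rfl⟩
        · exact ⟨Sum.inr ⟨i, v, hv⟩, rfl⟩
  have h1 : ∑ s, f (F s) = ∑ w : VG, f w := Fintype.sum_bijective F hbij _ _ (fun _ => rfl)
  rw [← h1, Fintype.sum_sum_type]
  congr 1
  rw [Fintype.sum_prod_type]
  refine Finset.sum_congr rfl fun i _ => ?_
  rw [show (fun y_1 : {v : VK // v ≠ y} => f (F (Sum.inr (i, y_1)))) = fun v => f (iK i v.1)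
    from rfl]
  exact (Finset.sum_subtype (univ.erase y) (fun v => by simp) (fun v => f (iK i v))).symm

lemma fiber_sum {r : ℕ} {VH : Type*} [Fintype VH] [DecidableEq VH]
    (p : Fin r → VH) (g : VH → ℝ) :
    ∑ u : VH, ((univ.filter fun i : Fin r => p i = u).card : ℝ) * g u = ∑ i : Fin r, g (p i) := by
  have : ∀ u : VH, ((univ.filter fun i : Fin r => p i = u).card : ℝ) * g u
      = ∑ i ∈ univ.filter fun i : Fin r => p i = u, g (p i) := by
    intro u
    rw [Finset.sum_congr rfl (fun i hi => by rw [(Finset.mem_filter.1 hi).2]),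
      Finset.sum_const, nsmul_eq_mul]
  simp_rw [this]
  exact Finset.sum_fiberwise_of_maps_to (fun i _ => Finset.mem_univ (p i)) (fun i => g (p i))

lemma graft_total {r : ℕ} {VH VK VG : Type*} [Fintype VH] [Fintype VK] [Fintype VG]
    [DecidableEq VH]
    (H : SimpleGraph VH) (K : SimpleGraph VK) (G : SimpleGraph VG)
    (p : Fin r → VH) (y : VK) (α : VH → ℝ) (β : VK → ℝ)
    (iH : VH → VG) (iK : Fin r → VK → VG)
    (hiH : Function.Injective iH) (hiK : ∀ i, Function.Injective (iK i))
    (hxy : ∀ i, iH (p i) = iK i y)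
    (hcover : ∀ w, (∃ u, w = iH u) ∨ (∃ i v, w = iK i v))
    (hdisjHK : ∀ i u v, iH u = iK i v → u = p i ∧ v = y)
    (hdisjKK : ∀ i j v v', i ≠ j → iK i v = iK j v' → v = y ∧ v' = y)
    (hdH : ∀ u u', G.dist (iH u) (iH u') = H.dist u u')
    (hdK : ∀ i v v', G.dist (iK i v) (iK i v') = K.dist v v')
    (hcross : ∀ i u v, G.dist (iH u) (iK i v) = H.dist u (p i) + K.dist y v)
    (hcrossKK : ∀ i j v v', i ≠ j →
      G.dist (iK i v) (iK j v') = K.dist v y + H.dist (p i) (p j) + K.dist y v')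
    (γ : VG → ℝ)
    (hγH : ∀ u, γ (iH u) = α u + ((univ.filter fun i : Fin r => p i = u).card : ℝ) * β y)
    (hγK : ∀ i v, v ≠ y → γ (iK i v) = β v) :
    ∑ w : VG, ∑ w' : VG, γ w' * (G.dist w w' : ℝ) =
      ((∑ u : VH, ∑ u' : VH, α u' * (H.dist u u' : ℝ))
        + (Fintype.card VH : ℝ) * ((r : ℝ) * ∑ v : VK, β v * (K.dist y v : ℝ))
        + ((∑ u : VH, α u) + (r : ℝ) * β y) * ((r : ℝ) * ∑ v : VK, (K.dist y v : ℝ))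
        + (r : ℝ) * ((∑ v : VK, ∑ v' : VK, β v' * (K.dist v v' : ℝ))
            - β y * (∑ v : VK, (K.dist y v : ℝ)) - ∑ v : VK, β v * (K.dist y v : ℝ))
        + (r : ℝ) * ((r - 1 : ℕ) : ℝ) *
            (((∑ v : VK, β v) - β y) * (∑ v : VK, (K.dist y v : ℝ))
              + ((Fintype.card VK : ℝ) - 1) * ∑ v : VK, β v * (K.dist y v : ℝ)))
      + (∑ j : Fin r, ∑ u : VH,
          (((Fintype.card VK : ℝ) - 1) * α u + ∑ v : VK, β v) * (H.dist u (p j) : ℝ))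
      + (∑ v : VK, β v) * ((Fintype.card VK : ℝ) - 1)
          * ∑ i : Fin r, ∑ j : Fin r, (H.dist (p i) (p j) : ℝ) := by
  classical
  -- abbreviations
  set B' : ℝ := ∑ v ∈ univ.erase y, β v with hB'
  set W : ℝ := ∑ v ∈ univ.erase y, β v * (K.dist y v : ℝ) with hW
  set E : ℝ := ∑ v ∈ univ.erase y, (K.dist y v : ℝ) with hE
  set k1 : ℝ := (Fintype.card VK : ℝ) - 1 with hk1
  have hcard : (((univ.erase y)).card : ℝ) = k1 := by
    rw [Finset.card_erase_of_mem (mem_univ y), Finset.card_univ, hk1]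
    have : 1 ≤ Fintype.card VK := Fintype.card_pos_iff.2 ⟨y⟩
    push_cast [Nat.cast_sub this]
    ring
  have hB : (∑ v : VK, β v) = β y + B' := (Finset.add_sum_erase univ β (mem_univ y)).symm
  -- split outer sum
  rw [sum_graft iH iK p y hiH hiK hxy hcover hdisjHK hdisjKK]
  -- split inner sums
  have split_inner : ∀ w : VG, ∑ w' : VG, γ w' * (G.dist w w' : ℝ)
      = ∑ u : VH, γ (iH u) * (G.dist w (iH u) : ℝ)
        + ∑ i : Fin r, ∑ v ∈ univ.erase y, γ (iK i v) * (G.dist w (iK i v) : ℝ) :=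
    fun w => sum_graft iH iK p y hiH hiK hxy hcover hdisjHK hdisjKK _
  simp_rw [split_inner]
  rw [Finset.sum_add_distrib]
  -- Block HH
  have BHH : ∑ u : VH, ∑ u' : VH, γ (iH u') * (G.dist (iH u) (iH u') : ℝ)
      = (∑ u : VH, ∑ u' : VH, α u' * (H.dist u u' : ℝ))
        + β y * ∑ u : VH, ∑ j : Fin r, (H.dist u (p j) : ℝ) := by
    simp_rw [hγH, hdH, add_mul, Finset.sum_add_distrib]
    congr 1
    rw [Finset.mul_sum]
    refine Finset.sum_congr rfl fun u _ => ?_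
    rw [Finset.mul_sum, ← fiber_sum p (fun u' => β y * (H.dist u u' : ℝ))]
    exact Finset.sum_congr rfl fun u' _ => by ring
  -- Block HK
  have BHK : ∑ u : VH, ∑ i : Fin r, ∑ v ∈ univ.erase y,
        γ (iK i v) * (G.dist (iH u) (iK i v) : ℝ)
      = B' * (∑ u : VH, ∑ i : Fin r, (H.dist u (p i) : ℝ))
        + (Fintype.card VH : ℝ) * ((r : ℝ) * W) := by
    have inner : ∀ (u : VH) (i : Fin r), ∑ v ∈ univ.erase y,
        γ (iK i v) * (G.dist (iH u) (iK i v) : ℝ) = B' * (H.dist u (p i) : ℝ) + W := by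
      intro u i
      have e1 : ∀ v ∈ univ.erase y, γ (iK i v) * (G.dist (iH u) (iK i v) : ℝ)
          = β v * (H.dist u (p i) : ℝ) + β v * (K.dist y v : ℝ) := fun v hv => by
        rw [hγK i v (Finset.ne_of_mem_erase hv), hcross]; push_cast; ring
      rw [Finset.sum_congr rfl e1, Finset.sum_add_distrib, ← Finset.sum_mul, ← hB', ← hW]
    simp_rw [inner, Finset.sum_add_distrib, Finset.sum_const, Finset.card_univ,
      Fintype.card_fin, nsmul_eq_mul, Finset.mul_sum]
  -- distance symmetry helpers
  have hcomm : ∀ (i : Fin r) (u : VH) (v : VK),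
      G.dist (iK i v) (iH u) = H.dist u (p i) + K.dist y v := fun i u v => by
    rw [SimpleGraph.dist_comm]; exact hcross i u v
  have hKcomm : ∀ v : VK, K.dist v y = K.dist y v := fun v => SimpleGraph.dist_comm ..
  -- Block KH
  have BKH : ∑ i : Fin r, ∑ v ∈ univ.erase y, ∑ u : VH,
        γ (iH u) * (G.dist (iK i v) (iH u) : ℝ)
      = k1 * (∑ i : Fin r, ∑ u : VH, α u * (H.dist u (p i) : ℝ))
        + k1 * β y * (∑ i : Fin r, ∑ j : Fin r, (H.dist (p j) (p i) : ℝ))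
        + ((∑ u : VH, α u) + (r : ℝ) * β y) * ((r : ℝ) * E) := by
    have inner : ∀ (i : Fin r), ∀ v ∈ univ.erase y, ∑ u : VH,
        γ (iH u) * (G.dist (iK i v) (iH u) : ℝ)
        = ((∑ u : VH, α u * (H.dist u (p i) : ℝ))
            + β y * ∑ j : Fin r, (H.dist (p j) (p i) : ℝ))
          + ((∑ u : VH, α u) + (r : ℝ) * β y) * (K.dist y v : ℝ) := by
      intro i v hv
      have e1 : ∀ u : VH, γ (iH u) * (G.dist (iK i v) (iH u) : ℝ)
          = α u * ((H.dist u (p i) : ℝ) + (K.dist y v : ℝ))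
            + ((univ.filter fun j : Fin r => p j = u).card : ℝ)
                * (β y * ((H.dist u (p i) : ℝ) + (K.dist y v : ℝ))) := fun u => by
        rw [hγH, hcomm]; push_cast; ring
      simp_rw [e1]
      rw [Finset.sum_add_distrib,
        fiber_sum p (fun u => β y * ((H.dist u (p i) : ℝ) + (K.dist y v : ℝ)))]
      simp_rw [mul_add]
      rw [Finset.sum_add_distrib, Finset.sum_add_distrib, ← Finset.sum_mul,
        ← Finset.sum_mul, Finset.sum_const, Finset.card_univ, Fintype.card_fin, nsmul_eq_mul]
      simp only [Finset.mul_sum]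
      ring
    rw [Finset.sum_congr rfl (fun i _ => Finset.sum_congr rfl (inner i))]
    simp_rw [Finset.sum_add_distrib, Finset.sum_const, nsmul_eq_mul, hcard, ← Finset.mul_sum,
      ← hE]
    rw [Finset.card_univ, Fintype.card_fin]
    ring
  -- Block KK
  have BKK : ∑ i : Fin r, ∑ v ∈ univ.erase y, ∑ j : Fin r, ∑ v' ∈ univ.erase y,
        γ (iK j v') * (G.dist (iK i v) (iK j v') : ℝ)
      = (r : ℝ) * (∑ v ∈ univ.erase y, ∑ v' ∈ univ.erase y, β v' * (K.dist v v' : ℝ))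
        + (r : ℝ) * ((r - 1 : ℕ) : ℝ) * (B' * E + k1 * W)
        + k1 * (B' * ∑ i : Fin r, ∑ j : Fin r, (H.dist (p i) (p j) : ℝ)) := by
    have inner : ∀ (i : Fin r), ∀ v ∈ univ.erase y,
        ∑ j : Fin r, ∑ v' ∈ univ.erase y, γ (iK j v') * (G.dist (iK i v) (iK j v') : ℝ)
        = (∑ v' ∈ univ.erase y, β v' * (K.dist v v' : ℝ))
          + ((r - 1 : ℕ) : ℝ) * (B' * (K.dist y v : ℝ) + W)
          + B' * ∑ j : Fin r, (H.dist (p i) (p j) : ℝ) := by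
      intro i v hv
      rw [← Finset.add_sum_erase _ _ (mem_univ i)]
      have t1 : ∑ v' ∈ univ.erase y, γ (iK i v') * (G.dist (iK i v) (iK i v') : ℝ)
          = ∑ v' ∈ univ.erase y, β v' * (K.dist v v' : ℝ) :=
        Finset.sum_congr rfl fun v' hv' => by
          rw [hγK i v' (Finset.ne_of_mem_erase hv'), hdK]
      have t2 : ∀ j ∈ univ.erase i,
          ∑ v' ∈ univ.erase y, γ (iK j v') * (G.dist (iK i v) (iK j v') : ℝ)
          = (B' * (K.dist y v : ℝ) + W) + B' * (H.dist (p i) (p j) : ℝ) := by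
        intro j hj
        have hij : i ≠ j := (Finset.ne_of_mem_erase hj).symm
        have e1 : ∀ v' ∈ univ.erase y, γ (iK j v') * (G.dist (iK i v) (iK j v') : ℝ)
            = β v' * (K.dist y v : ℝ) + β v' * (K.dist y v' : ℝ)
              + β v' * (H.dist (p i) (p j) : ℝ) := by
          intro v' hv'
          rw [hγK j v' (Finset.ne_of_mem_erase hv'), hcrossKK i j v v' hij, hKcomm]
          push_cast; ring
        rw [Finset.sum_congr rfl e1, Finset.sum_add_distrib, Finset.sum_add_distrib,
          ← Finset.sum_mul, ← Finset.sum_mul]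
      have hdiag : ∑ j ∈ univ.erase i, (H.dist (p i) (p j) : ℝ)
          = ∑ j : Fin r, (H.dist (p i) (p j) : ℝ) := by
        rw [← Finset.add_sum_erase univ (fun j => ((H.dist (p i) (p j) : ℕ) : ℝ)) (mem_univ i),
          SimpleGraph.dist_self]
        simp
      rw [t1, Finset.sum_congr rfl t2, Finset.sum_add_distrib, Finset.sum_const,
        Finset.card_erase_of_mem (mem_univ i), Finset.card_univ, Fintype.card_fin,
        ← Finset.mul_sum, hdiag, nsmul_eq_mul]
      ring
    rw [Finset.sum_congr rfl (fun i _ => Finset.sum_congr rfl (inner i))]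
    have h1 : ∀ i : Fin r, ∑ v ∈ univ.erase y,
        ((∑ v' ∈ univ.erase y, β v' * (K.dist v v' : ℝ))
          + ((r - 1 : ℕ) : ℝ) * (B' * (K.dist y v : ℝ) + W)
          + B' * ∑ j : Fin r, (H.dist (p i) (p j) : ℝ))
        = (∑ v ∈ univ.erase y, ∑ v' ∈ univ.erase y, β v' * (K.dist v v' : ℝ))
          + ((r - 1 : ℕ) : ℝ) * (B' * E + k1 * W)
          + k1 * (B' * ∑ j : Fin r, (H.dist (p i) (p j) : ℝ)) := by
      intro i
      simp only [mul_add]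
      rw [Finset.sum_add_distrib, Finset.sum_add_distrib, Finset.sum_add_distrib,
        Finset.sum_const, Finset.sum_const, nsmul_eq_mul, nsmul_eq_mul, hcard,
        ← Finset.mul_sum, ← Finset.mul_sum, ← hE]
      ring
    rw [Finset.sum_congr rfl (fun i _ => h1 i), Finset.sum_add_distrib, Finset.sum_add_distrib,
      Finset.sum_const, Finset.sum_const, Finset.card_univ, Fintype.card_fin, nsmul_eq_mul,
      nsmul_eq_mul, ← Finset.mul_sum, ← Finset.mul_sum]
    ring
  -- bridges to full sums
  have hEfull : ∑ v : VK, ((K.dist y v : ℕ) : ℝ) = E := by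
    rw [← Finset.add_sum_erase univ (fun v => ((K.dist y v : ℕ) : ℝ)) (mem_univ y),
      SimpleGraph.dist_self, ← hE]
    simp
  have hWfull : ∑ v : VK, β v * ((K.dist y v : ℕ) : ℝ) = W := by
    rw [← Finset.add_sum_erase univ (fun v => β v * ((K.dist y v : ℕ) : ℝ)) (mem_univ y),
      SimpleGraph.dist_self, ← hW]
    simp
  have hSCfull : ∑ v : VK, ∑ v' : VK, β v' * ((K.dist v v' : ℕ) : ℝ)
      = (∑ v ∈ univ.erase y, ∑ v' ∈ univ.erase y, β v' * (K.dist v v' : ℝ))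
        + β y * E + W := by
    rw [← Finset.add_sum_erase univ
      (fun v => ∑ v' : VK, β v' * ((K.dist v v' : ℕ) : ℝ)) (mem_univ y), hWfull]
    have h2 : ∀ v ∈ univ.erase y, ∑ v' : VK, β v' * ((K.dist v v' : ℕ) : ℝ)
        = β y * (K.dist y v : ℝ) + ∑ v' ∈ univ.erase y, β v' * (K.dist v v' : ℝ) := by
      intro v hv
      rw [← Finset.add_sum_erase univ (fun v' => β v' * ((K.dist v v' : ℕ) : ℝ)) (mem_univ y),
        hKcomm v]
    rw [Finset.sum_congr rfl h2, Finset.sum_add_distrib, ← Finset.mul_sum, ← hE]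
    ring
  -- assemble
  simp only [Finset.sum_add_distrib]
  rw [BHH, BHK, BKH, BKK, hB, hEfull, hWfull, hSCfull]
  have hc1 : ∑ u : VH, ∑ j : Fin r, ((H.dist u (p j) : ℕ) : ℝ)
      = ∑ j : Fin r, ∑ u : VH, ((H.dist u (p j) : ℕ) : ℝ) := Finset.sum_comm
  have hc2 : ∑ i : Fin r, ∑ j : Fin r, ((H.dist (p j) (p i) : ℕ) : ℝ)
      = ∑ i : Fin r, ∑ j : Fin r, ((H.dist (p i) (p j) : ℕ) : ℝ) := Finset.sum_comm
  have hP : ∑ j : Fin r, ∑ u : VH, (k1 * α u + (β y + B')) * ((H.dist u (p j) : ℕ) : ℝ)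
      = k1 * (∑ j : Fin r, ∑ u : VH, α u * ((H.dist u (p j) : ℕ) : ℝ))
        + (β y + B') * ∑ j : Fin r, ∑ u : VH, ((H.dist u (p j) : ℕ) : ℝ) := by
    simp only [add_mul, Finset.sum_add_distrib, Finset.mul_sum, mul_assoc]
  rw [hc1, hc2, hP]
  ring


/-- Comparison of moments: `G₁` attaches `r` copies of `K` (rooted at `y`) at the
distinct vertices `x₁,…,x_r` of `H`, while `G₂` attaches all `r` copies at a single
vertex `x`. Then, with `ξ = (|V_K|−1)α + B`,
`M_{G₂}^γ − M_{G₁}^γ = Σ_i [M_H^ξ(x) − M_H^ξ(x_i)] − B(|V_K|−1)·Σ_{i,j} dist_H(x_i,x_j)`;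
in particular the difference depends on `K` only through `|V_K|` and `B`. -/
theorem graft_moment_comparison
    {r : ℕ} {VH VK VG1 VG2 : Type*}
    [Fintype VH] [Fintype VK] [Fintype VG1] [Fintype VG2] [DecidableEq VH]
    (H : SimpleGraph VH) (K : SimpleGraph VK)
    (G1 : SimpleGraph VG1) (G2 : SimpleGraph VG2)
    (hH : H.Connected) (hK : K.Connected)
    (x1 : Fin r → VH) (hx1 : Function.Injective x1) (x : VH) (y : VK)
    (α : VH → ℝ) (β : VK → ℝ) (hα : ∀ u, 0 ≤ α u) (hβ : ∀ v, 0 ≤ β v)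
    (iH1 : VH → VG1) (iK1 : Fin r → VK → VG1)
    (hiH1 : Function.Injective iH1) (hiK1 : ∀ i, Function.Injective (iK1 i))
    (hxy1 : ∀ i, iH1 (x1 i) = iK1 i y)
    (hcover1 : ∀ w : VG1, (∃ u, w = iH1 u) ∨ (∃ i v, w = iK1 i v))
    (hdisjHK1 : ∀ i u v, iH1 u = iK1 i v → u = x1 i ∧ v = y)
    (hdisjKK1 : ∀ i j v v', i ≠ j → iK1 i v = iK1 j v' → v = y ∧ v' = y)
    (hdH1 : ∀ u u', G1.dist (iH1 u) (iH1 u') = H.dist u u')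
    (hdK1 : ∀ i v v', G1.dist (iK1 i v) (iK1 i v') = K.dist v v')
    (hcross1 : ∀ i u v, G1.dist (iH1 u) (iK1 i v) = H.dist u (x1 i) + K.dist y v)
    (hcrossKK1 : ∀ i j v v', i ≠ j →
      G1.dist (iK1 i v) (iK1 j v') =
        K.dist v y + H.dist (x1 i) (x1 j) + K.dist y v')
    (γ1 : VG1 → ℝ)
    (hγH1 : ∀ u : VH,
      γ1 (iH1 u) = α u + ((Finset.univ.filter (fun i : Fin r => x1 i = u)).card : ℝ) * β y)
    (hγK1 : ∀ i v, v ≠ y → γ1 (iK1 i v) = β v)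
    (iH2 : VH → VG2) (iK2 : Fin r → VK → VG2)
    (hiH2 : Function.Injective iH2) (hiK2 : ∀ i, Function.Injective (iK2 i))
    (hxy2 : ∀ i, iH2 ((fun _ => x) i) = iK2 i y)
    (hcover2 : ∀ w : VG2, (∃ u, w = iH2 u) ∨ (∃ i v, w = iK2 i v))
    (hdisjHK2 : ∀ i u v, iH2 u = iK2 i v → u = (fun _ => x) i ∧ v = y)
    (hdisjKK2 : ∀ i j v v', i ≠ j → iK2 i v = iK2 j v' → v = y ∧ v' = y)
    (hdH2 : ∀ u u', G2.dist (iH2 u) (iH2 u') = H.dist u u')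
    (hdK2 : ∀ i v v', G2.dist (iK2 i v) (iK2 i v') = K.dist v v')
    (hcross2 : ∀ i u v, G2.dist (iH2 u) (iK2 i v) = H.dist u ((fun _ => x) i) + K.dist y v)
    (hcrossKK2 : ∀ i j v v', i ≠ j →
      G2.dist (iK2 i v) (iK2 j v') =
        K.dist v y + H.dist ((fun _ => x) i) ((fun _ => x) j) + K.dist y v')
    (γ2 : VG2 → ℝ)
    (hγH2 : ∀ u : VH,
      γ2 (iH2 u) = α u + ((Finset.univ.filter (fun i : Fin r => (fun _ => x) i = u)).card : ℝ) * β y)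
    (hγK2 : ∀ i v, v ≠ y → γ2 (iK2 i v) = β v)
    :
    (∑ w : VG2, ∑ w' : VG2, γ2 w' * (G2.dist w w' : ℝ))
      - (∑ w : VG1, ∑ w' : VG1, γ1 w' * (G1.dist w w' : ℝ)) =
    (∑ i : Fin r,
        ((∑ u : VH, (((Fintype.card VK : ℝ) - 1) * α u + ∑ v : VK, β v)
            * (H.dist u x : ℝ))
         - (∑ u : VH, (((Fintype.card VK : ℝ) - 1) * α u + ∑ v : VK, β v)
            * (H.dist u (x1 i) : ℝ))))
      - (∑ v : VK, β v) * ((Fintype.card VK : ℝ) - 1)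
          * (∑ i : Fin r, ∑ j : Fin r, (H.dist (x1 i) (x1 j) : ℝ)) := by
  classical
  have T1 := graft_total H K G1 x1 y α β iH1 iK1 hiH1 hiK1 hxy1 hcover1 hdisjHK1 hdisjKK1
    hdH1 hdK1 hcross1 hcrossKK1 γ1 hγH1 hγK1
  have T2 := graft_total H K G2 (fun _ => x) y α β iH2 iK2 hiH2 hiK2 hxy2 hcover2 hdisjHK2
    hdisjKK2 hdH2 hdK2 hcross2 hcrossKK2 γ2 hγH2 hγK2
  rw [T1, T2]
  simp only [SimpleGraph.dist_self, Nat.cast_zero, Finset.sum_const, Finset.card_univ,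
    Fintype.card_fin, smul_zero, mul_zero, Finset.sum_sub_distrib, nsmul_eq_mul]
  ring
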